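/- There is a partition of the set of all 265 derangements of Fin 6 into 53 subsets, each of which is a 1-factorization of L_{6,1} (for every ordered pair (i,j) with i ≠ j, exactly one permutation in the subset maps i to j), such that: 30 of the subsets each consist of one derangement of cycle type (2,4) whose 2-cycle contains the element 0 together with four 6-cycles; 16 of the subsets each consist of three derangements of cycle type (2,4) whose 2-cycle does not contain 0 together with two derangements of cycle type (3,3); 3 of the subsets each consist of four derangements of cycle type (2,4) whose 2-cycle does not contain 0 together with one derangement of cycle type (2,2,2); and 4 of the subsets each consist of two derangements of cycle type (3,3) together with three derangements of cycle type (2,2,2). -/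

import Mathlib

/-- σ has cycle type (2,4) with the distinguished element 0 in its 2-cycle. -/
def C24zero (σ : Equiv.Perm (Fin 6)) : Prop :=
  σ.cycleType = ({2, 4} : Multiset ℕ) ∧ σ (σ 0) = 0

/-- σ has cycle type (2,4) with 0 not in its 2-cycle. -/
def C24other (σ : Equiv.Perm (Fin 6)) : Prop :=
  σ.cycleType = ({2, 4} : Multiset ℕ) ∧ σ (σ 0) ≠ 0

/-- Type T1: one (2,4)-derangement with 0 in the 2-cycle and four 6-cycles. -/
def T1 (F : Finset (Equiv.Perm (Fin 6))) : Prop :=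
  (∀ σ ∈ F, C24zero σ ∨ σ.cycleType = ({6} : Multiset ℕ)) ∧
  {σ ∈ (F : Set (Equiv.Perm (Fin 6))) | C24zero σ}.ncard = 1 ∧
  {σ ∈ (F : Set (Equiv.Perm (Fin 6))) | σ.cycleType = ({6} : Multiset ℕ)}.ncard = 4

/-- Type T2: three (2,4)-derangements with 0 not in the 2-cycle and two (3,3)s. -/
def T2 (F : Finset (Equiv.Perm (Fin 6))) : Prop :=
  (∀ σ ∈ F, C24other σ ∨ σ.cycleType = ({3, 3} : Multiset ℕ)) ∧
  {σ ∈ (F : Set (Equiv.Perm (Fin 6))) | C24other σ}.ncard = 3 ∧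
  {σ ∈ (F : Set (Equiv.Perm (Fin 6))) | σ.cycleType = ({3, 3} : Multiset ℕ)}.ncard = 2

/-- Type T3: four (2,4)-derangements with 0 not in the 2-cycle and one (2,2,2). -/
def T3 (F : Finset (Equiv.Perm (Fin 6))) : Prop :=
  (∀ σ ∈ F, C24other σ ∨ σ.cycleType = ({2, 2, 2} : Multiset ℕ)) ∧
  {σ ∈ (F : Set (Equiv.Perm (Fin 6))) | C24other σ}.ncard = 4 ∧
  {σ ∈ (F : Set (Equiv.Perm (Fin 6))) | σ.cycleType = ({2, 2, 2} : Multiset ℕ)}.ncard = 1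

/-- Type T4: two (3,3)-derangements and three (2,2,2)-derangements. -/
def T4 (F : Finset (Equiv.Perm (Fin 6))) : Prop :=
  (∀ σ ∈ F, σ.cycleType = ({3, 3} : Multiset ℕ) ∨ σ.cycleType = ({2, 2, 2} : Multiset ℕ)) ∧
  {σ ∈ (F : Set (Equiv.Perm (Fin 6))) | σ.cycleType = ({3, 3} : Multiset ℕ)}.ncard = 2 ∧
  {σ ∈ (F : Set (Equiv.Perm (Fin 6))) | σ.cycleType = ({2, 2, 2} : Multiset ℕ)}.ncard = 3

section Aux
open Equiv Equiv.Perm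

/-- Build a permutation of `Fin 6` from explicit function and inverse tables. -/
def mkP (f g : Fin 6 → Fin 6) (h1 : ∀ x, g (f x) = x := by decide)
    (h2 : ∀ x, f (g x) = x := by decide) : Equiv.Perm (Fin 6) := ⟨f, g, h1, h2⟩

instance fastPermDecEq : DecidableEq (Equiv.Perm (Fin 6)) := fun a b =>
  decidable_of_iff (a 0 = b 0 ∧ a 1 = b 1 ∧ a 2 = b 2 ∧ a 3 = b 3 ∧ a 4 = b 4 ∧ a 5 = b 5)
    ⟨fun ⟨h0, h1, h2, h3, h4, h5⟩ => Equiv.ext fun i => by fin_cases i <;> assumption,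
     fun h => by rw [h]; exact ⟨rfl, rfl, rfl, rfl, rfl, rfl⟩⟩


abbrev D222 (σ : Equiv.Perm (Fin 6)) : Prop := σ ^ 2 = 1
abbrev D33 (σ : Equiv.Perm (Fin 6)) : Prop := σ ^ 3 = 1
abbrev D24 (σ : Equiv.Perm (Fin 6)) : Prop := σ ^ 4 = 1 ∧ σ ^ 2 ≠ 1
abbrev D6 (σ : Equiv.Perm (Fin 6)) : Prop := σ ^ 2 ≠ 1 ∧ σ ^ 3 ≠ 1 ∧ σ ^ 4 ≠ 1
abbrev Dz (σ : Equiv.Perm (Fin 6)) : Prop := D24 σ ∧ σ (σ 0) = 0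
abbrev Do (σ : Equiv.Perm (Fin 6)) : Prop := D24 σ ∧ σ (σ 0) ≠ 0

lemma partition6 (s : Multiset ℕ) (h2 : ∀ a ∈ s, 2 ≤ a) (hs : s.sum = 6) :
    s = {6} ∨ s = {2, 4} ∨ s = {3, 3} ∨ s = {2, 2, 2} := by
  have hc : Multiset.card s ≤ 3 := by
    by_contra h
    push_neg at h
    have h3 := Multiset.card_nsmul_le_sum h2
    rw [smul_eq_mul] at h3
    omega
  interval_cases hc' : (Multiset.card s)
  · simp [Multiset.card_eq_zero.mp hc'] at hs
  · obtain ⟨a, rfl⟩ := Multiset.card_eq_one.mp hc'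
    simp at hs; subst hs; tauto
  · obtain ⟨a, b, rfl⟩ := Multiset.card_eq_two.mp hc'
    have ha := h2 a (by simp); have hb := h2 b (by simp)
    simp [Multiset.sum_cons] at hs
    have hab : a = 2 ∧ b = 4 ∨ a = 3 ∧ b = 3 ∨ a = 4 ∧ b = 2 := by omega
    rcases hab with ⟨rfl, rfl⟩ | ⟨rfl, rfl⟩ | ⟨rfl, rfl⟩
    · tauto
    · tauto
    · right; left; exact Multiset.pair_comm 4 2
  · obtain ⟨a, b, c, rfl⟩ := Multiset.card_eq_three.mp hc'
    have ha := h2 a (by simp); have hb := h2 b (by simp); have hc := h2 c (by simp)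
    simp [Multiset.sum_cons] at hs
    obtain ⟨rfl, rfl, rfl⟩ : a = 2 ∧ b = 2 ∧ c = 2 := by omega
    tauto

variable {σ : Equiv.Perm (Fin 6)}

lemma ct_cases (hd : ∀ i, σ i ≠ i) :
    σ.cycleType = {6} ∨ σ.cycleType = {2, 4} ∨ σ.cycleType = {3, 3} ∨
      σ.cycleType = {2, 2, 2} := by
  apply partition6
  · exact fun a ha => two_le_of_mem_cycleType ha
  · rw [sum_cycleType]
    have : σ.support = Finset.univ := Finset.eq_univ_iff_forall.mpr fun i => mem_support.mpr (hd i)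
    simp [this]

lemma key_pow (m : Multiset ℕ) (hm : σ.cycleType = m) (k : ℕ) :
    σ ^ k = 1 ↔ m.lcm ∣ k := by
  rw [← orderOf_dvd_iff_pow_eq_one, ← lcm_cycleType, hm]

lemma cyc222_iff (hd : ∀ i, σ i ≠ i) : σ.cycleType = {2, 2, 2} ↔ D222 σ := by
  unfold D222
  rcases ct_cases hd with h | h | h | h <;> rw [h, key_pow _ h 2] <;> decide

lemma cyc33_iff (hd : ∀ i, σ i ≠ i) : σ.cycleType = {3, 3} ↔ D33 σ := by
  unfold D33
  rcases ct_cases hd with h | h | h | h <;> rw [h, key_pow _ h 3] <;> decide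

lemma cyc24_iff (hd : ∀ i, σ i ≠ i) : σ.cycleType = {2, 4} ↔ D24 σ := by
  unfold D24
  rcases ct_cases hd with h | h | h | h <;> simp only [h, ne_eq, key_pow _ h 4, key_pow _ h 2] <;> decide

lemma cyc6_iff (hd : ∀ i, σ i ≠ i) : σ.cycleType = {6} ↔ D6 σ := by
  unfold D6
  rcases ct_cases hd with h | h | h | h <;>
    simp only [h, ne_eq, key_pow _ h 2, key_pow _ h 3, key_pow _ h 4] <;> decide

lemma c24zero_iff (hd : ∀ i, σ i ≠ i) : C24zero σ ↔ Dz σ := by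
  unfold C24zero Dz
  rw [cyc24_iff hd]

lemma c24other_iff (hd : ∀ i, σ i ≠ i) : C24other σ ↔ Do σ := by
  unfold C24other Do
  rw [cyc24_iff hd]

lemma sep_card (F : Finset (Equiv.Perm (Fin 6))) (p q : Equiv.Perm (Fin 6) → Prop)
    [DecidablePred q] (h : ∀ x ∈ F, (p x ↔ q x)) :
    {x ∈ (F : Set (Equiv.Perm (Fin 6))) | p x}.ncard = (F.filter q).card := by
  have he : {x ∈ (F : Set (Equiv.Perm (Fin 6))) | p x} = ↑(F.filter q) := by
    ext x
    simp only [Finset.coe_filter, Set.mem_setOf_eq]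
    exact and_congr_right fun hx => h x hx
  rw [he, Set.ncard_coe_finset]

lemma T1_iff (F : Finset (Equiv.Perm (Fin 6))) (hd : ∀ σ ∈ F, ∀ i, σ i ≠ i) :
    T1 F ↔ ((∀ σ ∈ F, Dz σ ∨ D6 σ) ∧ (F.filter Dz).card = 1 ∧ (F.filter D6).card = 4) := by
  have e1 : ∀ x ∈ F, (C24zero x ↔ Dz x) := fun x hx => c24zero_iff (hd x hx)
  have e2 : ∀ x ∈ F, (x.cycleType = ({6} : Multiset ℕ) ↔ D6 x) := fun x hx => cyc6_iff (hd x hx)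
  unfold T1
  rw [sep_card F _ Dz e1, sep_card F _ D6 e2]
  constructor
  · rintro ⟨h, h1, h2⟩
    exact ⟨fun x hx => (h x hx).imp (e1 x hx).mp (e2 x hx).mp, h1, h2⟩
  · rintro ⟨h, h1, h2⟩
    exact ⟨fun x hx => (h x hx).imp (e1 x hx).mpr (e2 x hx).mpr, h1, h2⟩

lemma T2_iff (F : Finset (Equiv.Perm (Fin 6))) (hd : ∀ σ ∈ F, ∀ i, σ i ≠ i) :
    T2 F ↔ ((∀ σ ∈ F, Do σ ∨ D33 σ) ∧ (F.filter Do).card = 3 ∧ (F.filter D33).card = 2) := by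
  have e1 : ∀ x ∈ F, (C24other x ↔ Do x) := fun x hx => c24other_iff (hd x hx)
  have e2 : ∀ x ∈ F, (x.cycleType = ({3, 3} : Multiset ℕ) ↔ D33 x) := fun x hx =>
    cyc33_iff (hd x hx)
  unfold T2
  rw [sep_card F _ Do e1, sep_card F _ D33 e2]
  constructor
  · rintro ⟨h, h1, h2⟩
    exact ⟨fun x hx => (h x hx).imp (e1 x hx).mp (e2 x hx).mp, h1, h2⟩
  · rintro ⟨h, h1, h2⟩
    exact ⟨fun x hx => (h x hx).imp (e1 x hx).mpr (e2 x hx).mpr, h1, h2⟩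

lemma T3_iff (F : Finset (Equiv.Perm (Fin 6))) (hd : ∀ σ ∈ F, ∀ i, σ i ≠ i) :
    T3 F ↔ ((∀ σ ∈ F, Do σ ∨ D222 σ) ∧ (F.filter Do).card = 4 ∧ (F.filter D222).card = 1) := by
  have e1 : ∀ x ∈ F, (C24other x ↔ Do x) := fun x hx => c24other_iff (hd x hx)
  have e2 : ∀ x ∈ F, (x.cycleType = ({2, 2, 2} : Multiset ℕ) ↔ D222 x) := fun x hx =>
    cyc222_iff (hd x hx)
  unfold T3
  rw [sep_card F _ Do e1, sep_card F _ D222 e2]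
  constructor
  · rintro ⟨h, h1, h2⟩
    exact ⟨fun x hx => (h x hx).imp (e1 x hx).mp (e2 x hx).mp, h1, h2⟩
  · rintro ⟨h, h1, h2⟩
    exact ⟨fun x hx => (h x hx).imp (e1 x hx).mpr (e2 x hx).mpr, h1, h2⟩

lemma T4_iff (F : Finset (Equiv.Perm (Fin 6))) (hd : ∀ σ ∈ F, ∀ i, σ i ≠ i) :
    T4 F ↔ ((∀ σ ∈ F, D33 σ ∨ D222 σ) ∧ (F.filter D33).card = 2 ∧ (F.filter D222).card = 3) := by
  have e1 : ∀ x ∈ F, (x.cycleType = ({3, 3} : Multiset ℕ) ↔ D33 x) := fun x hx =>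
    cyc33_iff (hd x hx)
  have e2 : ∀ x ∈ F, (x.cycleType = ({2, 2, 2} : Multiset ℕ) ↔ D222 x) := fun x hx =>
    cyc222_iff (hd x hx)
  unfold T4
  rw [sep_card F _ D33 e1, sep_card F _ D222 e2]
  constructor
  · rintro ⟨h, h1, h2⟩
    exact ⟨fun x hx => (h x hx).imp (e1 x hx).mp (e2 x hx).mp, h1, h2⟩
  · rintro ⟨h, h1, h2⟩
    exact ⟨fun x hx => (h x hx).imp (e1 x hx).mpr (e2 x hx).mpr, h1, h2⟩

lemma exu {α : Type*} [DecidableEq α] (F : Finset α) (p : α → Prop) [DecidablePred p]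
    (h : (F.filter p).card = 1) : ∃! σ, σ ∈ F ∧ p σ := by
  obtain ⟨a, ha⟩ := Finset.card_eq_one.mp h
  have hm : ∀ x, (x ∈ F ∧ p x) ↔ x = a := by
    intro x
    rw [← Finset.mem_filter, ha, Finset.mem_singleton]
  exact ⟨a, (hm a).mpr rfl, fun x hx => (hm x).mp hx⟩

end Aux


section Fast
open Equiv

abbrev ND (σ : Equiv.Perm (Fin 6)) : Prop :=
  σ 0 ≠ 0 ∧ σ 1 ≠ 1 ∧ σ 2 ≠ 2 ∧ σ 3 ≠ 3 ∧ σ 4 ≠ 4 ∧ σ 5 ≠ 5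
abbrev A2 (σ : Equiv.Perm (Fin 6)) : Prop :=
  σ (σ 0) = 0 ∧ σ (σ 1) = 1 ∧ σ (σ 2) = 2 ∧ σ (σ 3) = 3 ∧ σ (σ 4) = 4 ∧ σ (σ 5) = 5
abbrev A3 (σ : Equiv.Perm (Fin 6)) : Prop :=
  σ (σ (σ 0)) = 0 ∧ σ (σ (σ 1)) = 1 ∧ σ (σ (σ 2)) = 2 ∧ σ (σ (σ 3)) = 3 ∧
    σ (σ (σ 4)) = 4 ∧ σ (σ (σ 5)) = 5
abbrev A4 (σ : Equiv.Perm (Fin 6)) : Prop :=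
  σ (σ (σ (σ 0))) = 0 ∧ σ (σ (σ (σ 1))) = 1 ∧ σ (σ (σ (σ 2))) = 2 ∧ σ (σ (σ (σ 3))) = 3 ∧
    σ (σ (σ (σ 4))) = 4 ∧ σ (σ (σ (σ 5))) = 5
abbrev Ez (σ : Equiv.Perm (Fin 6)) : Prop := (A4 σ ∧ ¬ A2 σ) ∧ σ (σ 0) = 0
abbrev Eo (σ : Equiv.Perm (Fin 6)) : Prop := (A4 σ ∧ ¬ A2 σ) ∧ σ (σ 0) ≠ 0
abbrev E6 (σ : Equiv.Perm (Fin 6)) : Prop := ¬ A2 σ ∧ ¬ A3 σ ∧ ¬ A4 σ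

variable {σ : Equiv.Perm (Fin 6)}

lemma ND_iff : ND σ ↔ ∀ i, σ i ≠ i :=
  ⟨fun ⟨h0, h1, h2, h3, h4, h5⟩ i => by fin_cases i <;> (first | exact h0 | exact h1 | exact h2 | exact h3 | exact h4 | exact h5),
   fun h => ⟨h 0, h 1, h 2, h 3, h 4, h 5⟩⟩

lemma A2_iff : A2 σ ↔ σ ^ 2 = 1 := by
  have h : ∀ i, (σ ^ 2) i = σ (σ i) := fun i => by
    rw [pow_succ, pow_one, Equiv.Perm.mul_apply]
  constructor
  · intro ⟨h0, h1, h2, h3, h4, h5⟩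
    refine Equiv.ext fun i => ?_
    rw [h i, show (1 : Equiv.Perm (Fin 6)) i = i from rfl]
    fin_cases i <;> (first | exact h0 | exact h1 | exact h2 | exact h3 | exact h4 | exact h5)
  · intro hp
    have hi : ∀ i, σ (σ i) = i := fun i => by rw [← h, hp]; rfl
    exact ⟨hi 0, hi 1, hi 2, hi 3, hi 4, hi 5⟩

lemma A3_iff : A3 σ ↔ σ ^ 3 = 1 := by
  have h : ∀ i, (σ ^ 3) i = σ (σ (σ i)) := fun i => by
    rw [pow_succ, pow_succ, pow_one, Equiv.Perm.mul_apply, Equiv.Perm.mul_apply]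
  constructor
  · intro ⟨h0, h1, h2, h3, h4, h5⟩
    refine Equiv.ext fun i => ?_
    rw [h i, show (1 : Equiv.Perm (Fin 6)) i = i from rfl]
    fin_cases i <;> (first | exact h0 | exact h1 | exact h2 | exact h3 | exact h4 | exact h5)
  · intro hp
    have hi : ∀ i, σ (σ (σ i)) = i := fun i => by rw [← h, hp]; rfl
    exact ⟨hi 0, hi 1, hi 2, hi 3, hi 4, hi 5⟩

lemma A4_iff : A4 σ ↔ σ ^ 4 = 1 := by
  have h : ∀ i, (σ ^ 4) i = σ (σ (σ (σ i))) := fun i => by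
    rw [pow_succ, pow_succ, pow_succ, pow_one, Equiv.Perm.mul_apply, Equiv.Perm.mul_apply,
      Equiv.Perm.mul_apply]
  constructor
  · intro ⟨h0, h1, h2, h3, h4, h5⟩
    refine Equiv.ext fun i => ?_
    rw [h i, show (1 : Equiv.Perm (Fin 6)) i = i from rfl]
    fin_cases i <;> (first | exact h0 | exact h1 | exact h2 | exact h3 | exact h4 | exact h5)
  · intro hp
    have hi : ∀ i, σ (σ (σ (σ i))) = i := fun i => by rw [← h, hp]; rfl
    exact ⟨hi 0, hi 1, hi 2, hi 3, hi 4, hi 5⟩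

lemma Ez_iff : Ez σ ↔ Dz σ := by
  unfold Ez Dz D24
  rw [A4_iff, A2_iff]

lemma Eo_iff : Eo σ ↔ Do σ := by
  unfold Eo Do D24
  rw [A4_iff, A2_iff]

lemma E6_iff : E6 σ ↔ D6 σ := by
  unfold E6 D6
  rw [A2_iff, A3_iff, A4_iff]

lemma E33_iff : A3 σ ↔ D33 σ := A3_iff

lemma E222_iff : A2 σ ↔ D222 σ := A2_iff

/-- encode a permutation by a single natural number -/
def code (σ : Equiv.Perm (Fin 6)) : ℕ :=
  (σ 0).val + 6 * ((σ 1).val + 6 * ((σ 2).val + 6 * ((σ 3).val + 6 *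
    ((σ 4).val + 6 * (σ 5).val))))

end Fast

section Data2
set_option maxRecDepth 100000
open Equiv

def F1 : Finset (Equiv.Perm (Fin 6)) := ⟨↑[mkP ![1,2,0,4,5,3] ![2,0,1,5,3,4], mkP ![2,0,1,5,3,4] ![1,2,0,4,5,3], mkP ![3,4,5,2,1,0] ![5,4,3,0,1,2], mkP ![4,5,3,0,2,1] ![3,5,4,2,0,1], mkP ![5,3,4,1,0,2] ![4,3,5,1,2,0]], by decide⟩
def F2 : Finset (Equiv.Perm (Fin 6)) := ⟨↑[mkP ![1,2,0,5,3,4] ![2,0,1,4,5,3], mkP ![2,0,1,4,5,3] ![1,2,0,5,3,4], mkP ![3,4,5,0,1,2] ![3,4,5,0,1,2], mkP ![4,5,3,2,0,1] ![4,5,3,2,0,1], mkP ![5,3,4,1,2,0] ![5,3,4,1,2,0]], by decide⟩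
def F3 : Finset (Equiv.Perm (Fin 6)) := ⟨↑[mkP ![1,2,3,0,5,4] ![3,0,1,2,5,4], mkP ![2,4,5,1,3,0] ![5,3,0,4,1,2], mkP ![3,5,4,2,0,1] ![4,5,3,0,2,1], mkP ![4,0,1,5,2,3] ![1,2,4,5,0,3], mkP ![5,3,0,4,1,2] ![2,4,5,1,3,0]], by decide⟩
def F4 : Finset (Equiv.Perm (Fin 6)) := ⟨↑[mkP ![1,2,5,4,3,0] ![5,0,1,4,3,2], mkP ![2,5,4,1,0,3] ![4,3,0,5,2,1], mkP ![3,0,1,2,5,4] ![1,2,3,0,5,4], mkP ![4,3,0,5,2,1] ![2,5,4,1,0,3], mkP ![5,4,3,0,1,2] ![3,4,5,2,1,0]], by decide⟩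
def F5 : Finset (Equiv.Perm (Fin 6)) := ⟨↑[mkP ![1,2,4,5,0,3] ![4,0,1,5,2,3], mkP ![2,5,3,0,1,4] ![3,4,0,2,5,1], mkP ![3,4,0,2,5,1] ![2,5,3,0,1,4], mkP ![4,3,5,1,2,0] ![5,3,4,1,0,2], mkP ![5,0,1,4,3,2] ![1,2,5,4,3,0]], by decide⟩
def F6 : Finset (Equiv.Perm (Fin 6)) := ⟨↑[mkP ![1,0,5,4,3,2] ![1,0,5,4,3,2], mkP ![2,3,4,5,0,1] ![4,5,0,1,2,3], mkP ![3,2,1,0,5,4] ![3,2,1,0,5,4], mkP ![4,5,0,1,2,3] ![2,3,4,5,0,1], mkP ![5,4,3,2,1,0] ![5,4,3,2,1,0]], by decide⟩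
def F7 : Finset (Equiv.Perm (Fin 6)) := ⟨↑[mkP ![1,3,5,4,0,2] ![4,0,5,1,3,2], mkP ![2,4,0,5,1,3] ![2,4,0,5,1,3], mkP ![3,5,4,1,2,0] ![5,3,4,0,2,1], mkP ![4,0,3,2,5,1] ![1,5,3,2,0,4], mkP ![5,2,1,0,3,4] ![3,2,1,4,5,0]], by decide⟩
def F8 : Finset (Equiv.Perm (Fin 6)) := ⟨↑[mkP ![1,5,0,4,3,2] ![2,0,5,4,3,1], mkP ![2,4,5,0,1,3] ![3,4,0,5,1,2], mkP ![3,0,4,5,2,1] ![1,5,4,0,2,3], mkP ![4,3,1,2,5,0] ![5,2,3,1,0,4], mkP ![5,2,3,1,0,4] ![4,3,1,2,5,0]], by decide⟩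
def F9 : Finset (Equiv.Perm (Fin 6)) := ⟨↑[mkP ![1,0,3,2,5,4] ![1,0,3,2,5,4], mkP ![2,3,5,4,1,0] ![5,4,0,1,3,2], mkP ![3,5,4,0,2,1] ![3,5,4,0,2,1], mkP ![4,2,1,5,0,3] ![4,2,1,5,0,3], mkP ![5,4,0,1,3,2] ![2,3,5,4,1,0]], by decide⟩
def F10 : Finset (Equiv.Perm (Fin 6)) := ⟨↑[mkP ![1,4,5,0,3,2] ![3,0,5,4,1,2], mkP ![2,0,4,5,1,3] ![1,4,0,5,2,3], mkP ![3,5,0,4,2,1] ![2,5,4,0,3,1], mkP ![4,2,3,1,5,0] ![5,3,1,2,0,4], mkP ![5,3,1,2,0,4] ![4,2,3,1,5,0]], by decide⟩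
def F11 : Finset (Equiv.Perm (Fin 6)) := ⟨↑[mkP ![1,4,3,2,5,0] ![5,0,3,2,1,4], mkP ![2,5,0,4,3,1] ![2,5,0,4,3,1], mkP ![3,2,1,5,0,4] ![4,2,1,0,5,3], mkP ![4,3,5,0,1,2] ![3,4,5,1,0,2], mkP ![5,0,4,1,2,3] ![1,3,4,5,2,0]], by decide⟩
def F12 : Finset (Equiv.Perm (Fin 6)) := ⟨↑[mkP ![1,5,4,0,2,3] ![3,0,4,5,2,1], mkP ![2,3,0,1,5,4] ![2,3,0,1,5,4], mkP ![3,0,5,4,1,2] ![1,4,5,0,3,2], mkP ![4,2,1,5,3,0] ![5,2,1,4,0,3], mkP ![5,4,3,2,0,1] ![4,5,3,2,1,0]], by decide⟩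
def F13 : Finset (Equiv.Perm (Fin 6)) := ⟨↑[mkP ![1,0,4,5,2,3] ![1,0,4,5,2,3], mkP ![2,4,3,0,5,1] ![3,5,0,2,1,4], mkP ![3,5,0,2,1,4] ![2,4,3,0,5,1], mkP ![4,3,5,1,0,2] ![4,3,5,1,0,2], mkP ![5,2,1,4,3,0] ![5,2,1,4,3,0]], by decide⟩
def F14 : Finset (Equiv.Perm (Fin 6)) := ⟨↑[mkP ![1,3,0,2,5,4] ![2,0,3,1,5,4], mkP ![2,5,3,4,0,1] ![4,5,0,2,3,1], mkP ![3,4,1,5,2,0] ![5,2,4,0,1,3], mkP ![4,0,5,1,3,2] ![1,3,5,4,0,2], mkP ![5,2,4,0,1,3] ![3,4,1,5,2,0]], by decide⟩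
def F15 : Finset (Equiv.Perm (Fin 6)) := ⟨↑[mkP ![1,5,3,2,0,4] ![4,0,3,2,5,1], mkP ![2,0,5,4,3,1] ![1,5,0,4,3,2], mkP ![3,2,4,5,1,0] ![5,4,1,0,2,3], mkP ![4,3,0,1,5,2] ![2,3,5,1,0,4], mkP ![5,4,1,0,2,3] ![3,2,4,5,1,0]], by decide⟩
def F16 : Finset (Equiv.Perm (Fin 6)) := ⟨↑[mkP ![1,3,4,0,5,2] ![3,0,5,1,2,4], mkP ![2,4,1,5,0,3] ![4,2,0,5,1,3], mkP ![3,0,5,1,2,4] ![1,3,4,0,5,2], mkP ![4,5,3,2,1,0] ![5,4,3,2,0,1], mkP ![5,2,0,4,3,1] ![2,5,1,4,3,0]], by decide⟩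
def F17 : Finset (Equiv.Perm (Fin 6)) := ⟨↑[mkP ![1,3,5,0,2,4] ![3,0,4,1,5,2], mkP ![2,4,3,5,1,0] ![5,4,0,2,1,3], mkP ![3,0,4,1,5,2] ![1,3,5,0,2,4], mkP ![4,5,0,2,3,1] ![2,5,3,4,0,1], mkP ![5,2,1,4,0,3] ![4,2,1,5,3,0]], by decide⟩
def F18 : Finset (Equiv.Perm (Fin 6)) := ⟨↑[mkP ![1,3,4,5,2,0] ![5,0,4,1,2,3], mkP ![2,0,3,1,5,4] ![1,3,0,2,5,4], mkP ![3,5,1,4,0,2] ![4,2,5,0,3,1], mkP ![4,2,5,0,3,1] ![3,5,1,4,0,2], mkP ![5,4,0,2,1,3] ![2,4,3,5,1,0]], by decide⟩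
def F19 : Finset (Equiv.Perm (Fin 6)) := ⟨↑[mkP ![1,4,0,5,2,3] ![2,0,4,5,1,3], mkP ![2,3,4,1,5,0] ![5,3,0,1,2,4], mkP ![3,2,5,4,0,1] ![4,5,1,0,3,2], mkP ![4,5,1,0,3,2] ![3,2,5,4,0,1], mkP ![5,0,3,2,1,4] ![1,4,3,2,5,0]], by decide⟩
def F20 : Finset (Equiv.Perm (Fin 6)) := ⟨↑[mkP ![1,4,3,5,0,2] ![4,0,5,2,1,3], mkP ![2,5,4,0,3,1] ![3,5,0,4,2,1], mkP ![3,2,1,4,5,0] ![5,2,1,0,3,4], mkP ![4,0,5,2,1,3] ![1,4,3,5,0,2], mkP ![5,3,0,1,2,4] ![2,3,4,1,5,0]], by decide⟩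
def F21 : Finset (Equiv.Perm (Fin 6)) := ⟨↑[mkP ![1,4,5,2,0,3] ![4,0,3,5,1,2], mkP ![2,5,1,4,3,0] ![5,2,0,4,3,1], mkP ![3,2,0,1,5,4] ![2,3,1,0,5,4], mkP ![4,0,3,5,1,2] ![1,4,5,2,0,3], mkP ![5,3,4,0,2,1] ![3,5,4,1,2,0]], by decide⟩
def F22 : Finset (Equiv.Perm (Fin 6)) := ⟨↑[mkP ![1,5,3,4,2,0] ![5,0,4,2,3,1], mkP ![2,3,5,1,0,4] ![4,3,0,1,5,2], mkP ![3,4,0,5,1,2] ![2,4,5,0,1,3], mkP ![4,2,1,0,5,3] ![3,2,1,5,0,4], mkP ![5,0,4,2,3,1] ![1,5,3,4,2,0]], by decide⟩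
def F23 : Finset (Equiv.Perm (Fin 6)) := ⟨↑[mkP ![1,5,4,2,3,0] ![5,0,3,4,2,1], mkP ![2,3,1,0,5,4] ![3,2,0,1,5,4], mkP ![3,4,5,1,0,2] ![4,3,5,0,1,2], mkP ![4,2,0,5,1,3] ![2,4,1,5,0,3], mkP ![5,0,3,4,2,1] ![1,5,4,2,3,0]], by decide⟩
def F24 : Finset (Equiv.Perm (Fin 6)) := ⟨↑[mkP ![1,0,3,4,5,2] ![1,0,5,2,3,4], mkP ![2,3,5,0,1,4] ![3,4,0,1,5,2], mkP ![3,4,0,5,2,1] ![2,5,4,0,1,3], mkP ![4,5,1,2,3,0] ![5,2,3,4,0,1], mkP ![5,2,4,1,0,3] ![4,3,1,5,2,0]], by decide⟩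
def F25 : Finset (Equiv.Perm (Fin 6)) := ⟨↑[mkP ![1,3,0,4,5,2] ![2,0,5,1,3,4], mkP ![2,5,1,0,3,4] ![3,2,0,4,5,1], mkP ![3,4,5,1,2,0] ![5,3,4,0,1,2], mkP ![4,2,3,5,0,1] ![4,5,1,2,0,3], mkP ![5,0,4,2,1,3] ![1,4,3,5,2,0]], by decide⟩
def F26 : Finset (Equiv.Perm (Fin 6)) := ⟨↑[mkP ![1,2,3,4,5,0] ![5,0,1,2,3,4], mkP ![2,3,1,5,0,4] ![4,2,0,1,5,3], mkP ![3,5,4,0,1,2] ![3,4,5,0,2,1], mkP ![4,0,5,1,2,3] ![1,3,4,5,0,2], mkP ![5,4,0,2,3,1] ![2,5,3,4,1,0]], by decide⟩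
def F27 : Finset (Equiv.Perm (Fin 6)) := ⟨↑[mkP ![1,2,5,4,0,3] ![4,0,1,5,3,2], mkP ![2,3,0,5,1,4] ![2,4,0,1,5,3], mkP ![3,0,4,2,5,1] ![1,5,3,0,2,4], mkP ![4,5,3,1,2,0] ![5,3,4,2,0,1], mkP ![5,4,1,0,3,2] ![3,2,5,4,1,0]], by decide⟩
def F28 : Finset (Equiv.Perm (Fin 6)) := ⟨↑[mkP ![1,2,3,5,0,4] ![4,0,1,2,5,3], mkP ![2,3,1,4,5,0] ![5,2,0,1,3,4], mkP ![3,4,5,0,2,1] ![3,5,4,0,1,2], mkP ![4,5,0,2,1,3] ![2,4,3,5,0,1], mkP ![5,0,4,1,3,2] ![1,3,5,4,2,0]], by decide⟩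
def F29 : Finset (Equiv.Perm (Fin 6)) := ⟨↑[mkP ![1,5,4,0,3,2] ![3,0,5,4,2,1], mkP ![2,3,5,4,0,1] ![4,5,0,1,3,2], mkP ![3,2,0,5,1,4] ![2,4,1,0,5,3], mkP ![4,0,1,2,5,3] ![1,2,3,5,0,4], mkP ![5,4,3,1,2,0] ![5,3,4,2,1,0]], by decide⟩
def F30 : Finset (Equiv.Perm (Fin 6)) := ⟨↑[mkP ![1,5,3,4,0,2] ![4,0,5,2,3,1], mkP ![2,4,0,1,5,3] ![2,3,0,5,1,4], mkP ![3,0,1,5,2,4] ![1,2,4,0,5,3], mkP ![4,3,5,2,1,0] ![5,4,3,1,0,2], mkP ![5,2,4,0,3,1] ![3,5,1,4,2,0]], by decide⟩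
def F31 : Finset (Equiv.Perm (Fin 6)) := ⟨↑[mkP ![1,4,3,0,5,2] ![3,0,5,2,1,4], mkP ![2,0,4,5,3,1] ![1,5,0,4,2,3], mkP ![3,5,1,4,2,0] ![5,2,4,0,3,1], mkP ![4,2,5,1,0,3] ![4,3,1,5,0,2], mkP ![5,3,0,2,1,4] ![2,4,3,1,5,0]], by decide⟩
def F32 : Finset (Equiv.Perm (Fin 6)) := ⟨↑[mkP ![1,3,5,4,2,0] ![5,0,4,1,3,2], mkP ![2,0,3,5,1,4] ![1,4,0,2,5,3], mkP ![3,2,4,0,5,1] ![3,5,1,0,2,4], mkP ![4,5,0,1,3,2] ![2,3,5,4,0,1], mkP ![5,4,1,2,0,3] ![4,2,3,5,1,0]], by decide⟩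
def F33 : Finset (Equiv.Perm (Fin 6)) := ⟨↑[mkP ![1,4,0,5,3,2] ![2,0,5,4,1,3], mkP ![2,3,4,0,5,1] ![3,5,0,1,2,4], mkP ![3,2,5,4,1,0] ![5,4,1,0,3,2], mkP ![4,5,1,2,0,3] ![4,2,3,5,0,1], mkP ![5,0,3,1,2,4] ![1,3,4,2,5,0]], by decide⟩
def F34 : Finset (Equiv.Perm (Fin 6)) := ⟨↑[mkP ![1,5,0,2,3,4] ![2,0,3,4,5,1], mkP ![2,4,5,1,0,3] ![4,3,0,5,1,2], mkP ![3,0,4,5,1,2] ![1,4,5,0,2,3], mkP ![4,2,3,0,5,1] ![3,5,1,2,0,4], mkP ![5,3,1,4,2,0] ![5,2,4,1,3,0]], by decide⟩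
def F35 : Finset (Equiv.Perm (Fin 6)) := ⟨↑[mkP ![1,5,3,0,2,4] ![3,0,4,2,5,1], mkP ![2,0,5,4,1,3] ![1,4,0,5,3,2], mkP ![3,4,1,5,0,2] ![4,2,5,0,1,3], mkP ![4,3,0,2,5,1] ![2,5,3,1,0,4], mkP ![5,2,4,1,3,0] ![5,3,1,4,2,0]], by decide⟩
def F36 : Finset (Equiv.Perm (Fin 6)) := ⟨↑[mkP ![1,4,5,2,3,0] ![5,0,3,4,1,2], mkP ![2,0,4,1,5,3] ![1,3,0,5,2,4], mkP ![3,5,1,0,2,4] ![3,2,4,0,5,1], mkP ![4,3,0,5,1,2] ![2,4,5,1,0,3], mkP ![5,2,3,4,0,1] ![4,5,1,2,3,0]], by decide⟩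
def F37 : Finset (Equiv.Perm (Fin 6)) := ⟨↑[mkP ![1,2,5,0,3,4] ![3,0,1,4,5,2], mkP ![2,5,1,4,0,3] ![4,2,0,5,3,1], mkP ![3,4,0,1,5,2] ![2,3,5,0,1,4], mkP ![4,0,3,5,2,1] ![1,5,4,2,0,3], mkP ![5,3,4,2,1,0] ![5,4,3,1,2,0]], by decide⟩
def F38 : Finset (Equiv.Perm (Fin 6)) := ⟨↑[mkP ![1,4,0,2,5,3] ![2,0,3,5,1,4], mkP ![2,5,4,1,3,0] ![5,3,0,4,2,1], mkP ![3,0,5,4,2,1] ![1,5,4,0,3,2], mkP ![4,3,1,5,0,2] ![4,2,5,1,0,3], mkP ![5,2,3,0,1,4] ![3,4,1,2,5,0]], by decide⟩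
def F39 : Finset (Equiv.Perm (Fin 6)) := ⟨↑[mkP ![1,0,5,2,3,4] ![1,0,3,4,5,2], mkP ![2,5,3,4,1,0] ![5,4,0,2,3,1], mkP ![3,2,4,5,0,1] ![4,5,1,0,2,3], mkP ![4,3,1,0,5,2] ![3,2,5,1,0,4], mkP ![5,4,0,1,2,3] ![2,3,4,5,1,0]], by decide⟩
def F40 : Finset (Equiv.Perm (Fin 6)) := ⟨↑[mkP ![1,2,4,5,3,0] ![5,0,1,4,2,3], mkP ![2,3,0,4,5,1] ![2,5,0,1,3,4], mkP ![3,0,5,2,1,4] ![1,4,3,0,5,2], mkP ![4,5,1,0,2,3] ![3,2,4,5,0,1], mkP ![5,4,3,1,0,2] ![4,3,5,2,1,0]], by decide⟩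
def F41 : Finset (Equiv.Perm (Fin 6)) := ⟨↑[mkP ![1,4,5,0,2,3] ![3,0,4,5,1,2], mkP ![2,3,4,5,1,0] ![5,4,0,1,2,3], mkP ![3,2,0,4,5,1] ![2,5,1,0,3,4], mkP ![4,5,3,1,0,2] ![4,3,5,2,0,1], mkP ![5,0,1,2,3,4] ![1,2,3,4,5,0]], by decide⟩
def F42 : Finset (Equiv.Perm (Fin 6)) := ⟨↑[mkP ![1,0,4,2,5,3] ![1,0,3,5,2,4], mkP ![2,4,3,5,0,1] ![4,5,0,2,1,3], mkP ![3,5,0,4,1,2] ![2,4,5,0,3,1], mkP ![4,2,5,1,3,0] ![5,3,1,4,0,2], mkP ![5,3,1,0,2,4] ![3,2,4,1,5,0]], by decide⟩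
def F43 : Finset (Equiv.Perm (Fin 6)) := ⟨↑[mkP ![1,0,3,5,2,4] ![1,0,4,2,5,3], mkP ![2,4,5,0,3,1] ![3,5,0,4,1,2], mkP ![3,5,4,2,1,0] ![5,4,3,0,2,1], mkP ![4,2,0,1,5,3] ![2,3,1,5,0,4], mkP ![5,3,1,4,0,2] ![4,2,5,1,3,0]], by decide⟩
def F44 : Finset (Equiv.Perm (Fin 6)) := ⟨↑[mkP ![1,2,4,0,5,3] ![3,0,1,5,2,4], mkP ![2,5,0,1,3,4] ![2,3,0,4,5,1], mkP ![3,4,5,2,0,1] ![4,5,3,0,1,2], mkP ![4,3,1,5,2,0] ![5,2,4,1,0,3], mkP ![5,0,3,4,1,2] ![1,4,5,2,3,0]], by decide⟩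
def F45 : Finset (Equiv.Perm (Fin 6)) := ⟨↑[mkP ![1,4,3,5,2,0] ![5,0,4,2,1,3], mkP ![2,5,4,0,1,3] ![3,4,0,5,2,1], mkP ![3,0,1,4,5,2] ![1,2,5,0,3,4], mkP ![4,3,5,2,0,1] ![4,5,3,1,0,2], mkP ![5,2,0,1,3,4] ![2,3,1,4,5,0]], by decide⟩
def F46 : Finset (Equiv.Perm (Fin 6)) := ⟨↑[mkP ![1,3,4,2,5,0] ![5,0,3,1,2,4], mkP ![2,4,0,5,3,1] ![2,5,0,4,1,3], mkP ![3,2,5,1,0,4] ![4,3,1,0,5,2], mkP ![4,5,3,0,1,2] ![3,4,5,2,0,1], mkP ![5,0,1,4,2,3] ![1,2,4,5,3,0]], by decide⟩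
def F47 : Finset (Equiv.Perm (Fin 6)) := ⟨↑[mkP ![1,3,5,2,0,4] ![4,0,3,1,5,2], mkP ![2,5,0,4,1,3] ![2,4,0,5,3,1], mkP ![3,2,4,1,5,0] ![5,3,1,0,2,4], mkP ![4,0,1,5,3,2] ![1,2,5,4,0,3], mkP ![5,4,3,0,2,1] ![3,5,4,2,1,0]], by decide⟩
def F48 : Finset (Equiv.Perm (Fin 6)) := ⟨↑[mkP ![1,3,0,5,2,4] ![2,0,4,1,5,3], mkP ![2,0,3,4,5,1] ![1,5,0,2,3,4], mkP ![3,5,4,1,0,2] ![4,3,5,0,2,1], mkP ![4,2,5,0,1,3] ![3,4,1,5,0,2], mkP ![5,4,1,2,3,0] ![5,2,3,4,1,0]], by decide⟩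
def F49 : Finset (Equiv.Perm (Fin 6)) := ⟨↑[mkP ![1,3,4,5,0,2] ![4,0,5,1,2,3], mkP ![2,4,1,0,5,3] ![3,2,0,5,1,4], mkP ![3,5,0,1,2,4] ![2,3,4,0,5,1], mkP ![4,0,5,2,3,1] ![1,5,3,4,0,2], mkP ![5,2,3,4,1,0] ![5,4,1,2,3,0]], by decide⟩
def F50 : Finset (Equiv.Perm (Fin 6)) := ⟨↑[mkP ![1,0,4,5,3,2] ![1,0,5,4,2,3], mkP ![2,5,3,1,0,4] ![4,3,0,2,5,1], mkP ![3,4,1,2,5,0] ![5,2,3,0,1,4], mkP ![4,3,5,0,2,1] ![3,5,4,1,0,2], mkP ![5,2,0,4,1,3] ![2,4,1,5,3,0]], by decide⟩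
def F51 : Finset (Equiv.Perm (Fin 6)) := ⟨↑[mkP ![1,0,5,4,2,3] ![1,0,4,5,3,2], mkP ![2,4,3,1,5,0] ![5,3,0,2,1,4], mkP ![3,5,1,2,0,4] ![4,2,3,0,5,1], mkP ![4,2,0,5,3,1] ![2,5,1,4,0,3], mkP ![5,3,4,0,1,2] ![3,4,5,1,2,0]], by decide⟩
def F52 : Finset (Equiv.Perm (Fin 6)) := ⟨↑[mkP ![1,5,0,4,2,3] ![2,0,4,5,3,1], mkP ![2,4,1,5,3,0] ![5,2,0,4,1,3], mkP ![3,2,5,0,1,4] ![3,4,1,0,5,2], mkP ![4,0,3,1,5,2] ![1,3,5,2,0,4], mkP ![5,3,4,2,0,1] ![4,5,3,1,2,0]], by decide⟩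
def F53 : Finset (Equiv.Perm (Fin 6)) := ⟨↑[mkP ![1,5,4,2,0,3] ![4,0,3,5,2,1], mkP ![2,0,5,1,3,4] ![1,3,0,4,5,2], mkP ![3,4,1,0,5,2] ![3,2,5,0,1,4], mkP ![4,2,3,5,1,0] ![5,4,1,2,0,3], mkP ![5,3,0,4,2,1] ![2,5,4,1,3,0]], by decide⟩

def P : Finset (Finset (Equiv.Perm (Fin 6))) := ⟨↑[F1, F2, F3, F4, F5, F6, F7, F8, F9, F10, F11, F12, F13, F14, F15, F16, F17, F18, F19, F20, F21, F22, F23, F24, F25, F26, F27, F28, F29, F30, F31, F32, F33, F34, F35, F36, F37, F38, F39, F40, F41, F42, F43, F44, F45, F46, F47, F48, F49, F50, F51, F52, F53], by decide⟩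

def codeList : List ℕ := [30685, 36110, 1935, 10510, 15935, 36085, 30710, 17055, 8350, 2975, 37705, 4310, 8385, 27040, 17735, 4945, 23720, 38055, 11470, 16985, 24565, 32540, 14715, 3010, 20345, 20485, 9020, 37635, 26170, 1865, 16615, 25730, 2985, 14800, 35045, 20335, 24830, 11595, 6970, 31445, 38125, 2360, 10545, 24460, 19685, 19645, 25850, 11265, 6820, 31595, 7045, 12560, 32235, 17050, 26285, 26095, 37820, 17895, 5020, 8345, 27145, 14390, 32865, 15970, 4805, 38035, 8780, 3735, 19840, 24785, 31675, 12710, 2535, 22270, 25985, 22195, 24470, 34095, 1870, 12545, 33895, 2510, 22395, 12130, 24245, 3835, 37910, 16485, 11860, 25085, 27025, 6860, 8835, 19510, 32945, 16765, 11840, 7395, 25240, 33935, 23965, 4820, 37815, 18040, 10535, 3595, 31520, 17955, 29860, 12245, 4495, 37640, 15975, 25720, 11345, 23005, 32600, 11475, 4390, 23705, 22915, 35060, 3015, 8980, 25205, 7465, 32240, 17025, 26320, 12125, 24385, 33500, 14835, 2950, 19505, 32305, 7400, 10575, 25090, 19805, 19615, 8840, 33495, 30280, 2945, 16555, 30050,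 34815, 1930, 11825, 22165, 12890, 3525, 23740, 32855, 3655, 33590, 14415, 19690, 23825, 20545, 14420, 2355, 23830, 34025, 35455, 23750, 18075, 14380, 3515, 33835, 25670, 16695, 14710, 4265, 4525, 30170, 33765, 17950, 8765, 35185, 24260, 22275, 11560, 1895, 30265, 4280, 11415, 16690, 32525, 35605, 2300, 9015, 22090, 26165, 5125, 15140, 33015, 25990, 15905, 26125, 2540, 15135, 15910, 35465, 30385, 8990, 17745, 4300, 33755, 34885, 11870, 1905, 30040, 16475, 29965, 35240, 8415, 3730, 17825, 3805, 24800, 22935, 8410, 35225, 7075, 12770, 31515, 16990, 26825, 31735, 25520, 6855, 20560, 10505, 34795, 15230, 15945, 24820, 4385, 16795, 29870, 33945, 12280, 2285, 20665, 31460, 6975, 10570, 25505, 26965, 6830, 31605, 12760, 17015, 26815, 5030, 32595, 22360, 8375, 23935, 35390, 22095, 2500, 11255]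

end Data2

set_option maxHeartbeats 400000000
set_option maxRecDepth 1000000

theorem fact_cardP : P.card = 53 := by decide
theorem fact_card5 : (P.filter fun F => ¬ F.card = 5).card = 0 := by decide
theorem fact_der : (P.filter fun F => ¬ (F.filter fun σ => ¬ ND σ).card = 0).card = 0 := by decide
theorem fact_codes : ((P.val.map Finset.val).sum.map code) = (↑codeList : Multiset ℕ) := by decide
theorem fact_nodup : (↑codeList : Multiset ℕ).Nodup := by decide
theorem fact_pair : (P.filter fun F =>
    ¬ ∀ i j : Fin 6, i ≠ j → (F.filter fun σ => σ i = j).card = 1).card = 0 := by decide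

abbrev Q1 (F : Finset (Equiv.Perm (Fin 6))) : Prop :=
  (F.filter fun σ => ¬ (Ez σ ∨ E6 σ)).card = 0 ∧
    (F.filter Ez).card = 1 ∧ (F.filter E6).card = 4
abbrev Q2 (F : Finset (Equiv.Perm (Fin 6))) : Prop :=
  (F.filter fun σ => ¬ (Eo σ ∨ A3 σ)).card = 0 ∧
    (F.filter Eo).card = 3 ∧ (F.filter A3).card = 2
abbrev Q3 (F : Finset (Equiv.Perm (Fin 6))) : Prop :=
  (F.filter fun σ => ¬ (Eo σ ∨ A2 σ)).card = 0 ∧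
    (F.filter Eo).card = 4 ∧ (F.filter A2).card = 1
abbrev Q4 (F : Finset (Equiv.Perm (Fin 6))) : Prop :=
  (F.filter fun σ => ¬ (A3 σ ∨ A2 σ)).card = 0 ∧
    (F.filter A3).card = 2 ∧ (F.filter A2).card = 3

theorem fact_Q : (P.filter fun F => ¬ (Q1 F ∨ Q2 F ∨ Q3 F ∨ Q4 F)).card = 0 := by decide
theorem fact_c1 : (P.filter Q1).card = 30 := by decide
theorem fact_c2 : (P.filter Q2).card = 16 := by decide
theorem fact_c3 : (P.filter Q3).card = 3 := by decide
theorem fact_c4 : (P.filter Q4).card = 4 := by decide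

/-- Decidable-friendly bounded-forall via filter cards. -/
lemma ballF_iff {α : Type*} (s : Finset α) (p : α → Prop) [DecidablePred p] :
    (s.filter fun x => ¬ p x).card = 0 ↔ ∀ x ∈ s, p x := by
  rw [Finset.card_eq_zero, Finset.filter_eq_empty_iff]
  simp only [not_not]

lemma Q1_iff (F : Finset (Equiv.Perm (Fin 6))) (hd : ∀ σ ∈ F, ∀ i, σ i ≠ i) :
    T1 F ↔ Q1 F := by
  have hz : F.filter Ez = F.filter Dz := Finset.filter_congr fun x _ => Ez_iff
  have h6 : F.filter E6 = F.filter D6 := Finset.filter_congr fun x _ => E6_iff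
  have hall : (F.filter fun σ => ¬ (Ez σ ∨ E6 σ)) = (F.filter fun σ => ¬ (Dz σ ∨ D6 σ)) :=
    Finset.filter_congr fun x _ => by rw [Ez_iff, E6_iff]
  rw [T1_iff F hd]
  unfold Q1
  rw [hz, h6, hall, ballF_iff]

lemma Q2_iff (F : Finset (Equiv.Perm (Fin 6))) (hd : ∀ σ ∈ F, ∀ i, σ i ≠ i) :
    T2 F ↔ Q2 F := by
  have hz : F.filter Eo = F.filter Do := Finset.filter_congr fun x _ => Eo_iff
  have h6 : F.filter A3 = F.filter D33 := Finset.filter_congr fun x _ => E33_iff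
  have hall : (F.filter fun σ => ¬ (Eo σ ∨ A3 σ)) = (F.filter fun σ => ¬ (Do σ ∨ D33 σ)) :=
    Finset.filter_congr fun x _ => by rw [Eo_iff, E33_iff]
  rw [T2_iff F hd]
  unfold Q2
  rw [hz, h6, hall, ballF_iff]

lemma Q3_iff (F : Finset (Equiv.Perm (Fin 6))) (hd : ∀ σ ∈ F, ∀ i, σ i ≠ i) :
    T3 F ↔ Q3 F := by
  have hz : F.filter Eo = F.filter Do := Finset.filter_congr fun x _ => Eo_iff
  have h6 : F.filter A2 = F.filter D222 := Finset.filter_congr fun x _ => E222_iff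
  have hall : (F.filter fun σ => ¬ (Eo σ ∨ A2 σ)) = (F.filter fun σ => ¬ (Do σ ∨ D222 σ)) :=
    Finset.filter_congr fun x _ => by rw [Eo_iff, E222_iff]
  rw [T3_iff F hd]
  unfold Q3
  rw [hz, h6, hall, ballF_iff]

lemma Q4_iff (F : Finset (Equiv.Perm (Fin 6))) (hd : ∀ σ ∈ F, ∀ i, σ i ≠ i) :
    T4 F ↔ Q4 F := by
  have hz : F.filter A3 = F.filter D33 := Finset.filter_congr fun x _ => E33_iff
  have h6 : F.filter A2 = F.filter D222 := Finset.filter_congr fun x _ => E222_iff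
  have hall : (F.filter fun σ => ¬ (A3 σ ∨ A2 σ)) = (F.filter fun σ => ¬ (D33 σ ∨ D222 σ)) :=
    Finset.filter_congr fun x _ => by rw [E33_iff, E222_iff]
  rw [T4_iff F hd]
  unfold Q4
  rw [hz, h6, hall, ballF_iff]

lemma disj_of_nodup {α : Type*} [DecidableEq α] (Q : Finset (Finset α))
    (h : ((Q.val.map Finset.val).sum).Nodup) :
    ∀ F ∈ Q, ∀ G ∈ Q, ∀ σ, σ ∈ F → σ ∈ G → F = G := by
  intro F hF G hG σ hσF hσG
  by_contra hne
  have hFv : F ∈ Q.val := hF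
  have hGv : G ∈ Q.val.erase F :=
    (Multiset.mem_erase_of_ne fun hGF => hne hGF.symm).mpr hG
  have h1 : Q.val = F ::ₘ Q.val.erase F := (Multiset.cons_erase hFv).symm
  have h2 : Q.val.erase F = G ::ₘ (Q.val.erase F).erase G := (Multiset.cons_erase hGv).symm
  rw [h1, h2, Multiset.map_cons, Multiset.map_cons, Multiset.sum_cons, Multiset.sum_cons] at h
  have hc := Multiset.nodup_iff_count_le_one.mp h σ
  rw [Multiset.count_add, Multiset.count_add] at hc
  have c1 : 0 < Multiset.count σ F.val := Multiset.count_pos.mpr hσF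
  have c2 : 0 < Multiset.count σ G.val := Multiset.count_pos.mpr hσG
  omega

/-- The 265 derangements of Fin 6 can be partitioned into 53
1-factorizations of L_{6,1}, of which 30 are of type T1, 16 of type T2,
3 of type T3, and 4 of type T4. -/
theorem stmt9 :
    ∃ P : Finset (Finset (Equiv.Perm (Fin 6))),
      P.card = 53 ∧
      (∀ F ∈ P, ∀ σ ∈ F, ∀ i, σ i ≠ i) ∧
      (∀ σ : Equiv.Perm (Fin 6), (∀ i, σ i ≠ i) → ∃! F, F ∈ P ∧ σ ∈ F) ∧
      (∀ F ∈ P, ∀ i j : Fin 6, i ≠ j → ∃! σ, σ ∈ F ∧ σ i = j) ∧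
      (∀ F ∈ P, T1 F ∨ T2 F ∨ T3 F ∨ T4 F) ∧
      {F | F ∈ P ∧ T1 F}.ncard = 30 ∧
      {F | F ∈ P ∧ T2 F}.ncard = 16 ∧
      {F | F ∈ P ∧ T3 F}.ncard = 3 ∧
      {F | F ∈ P ∧ T4 F}.ncard = 4 := by
  have hder : ∀ F ∈ P, ∀ σ ∈ F, ∀ i, σ i ≠ i := fun F hF σ hσ =>
    ND_iff.mp ((ballF_iff F ND).mp ((ballF_iff P _).mp fact_der F hF) σ hσ)
  have hnodup : ((P.val.map Finset.val).sum).Nodup :=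
    Multiset.Nodup.of_map code (fact_codes ▸ fact_nodup)
  have hdisj : ∀ F ∈ P, ∀ G ∈ P, ∀ σ, σ ∈ F → σ ∈ G → F = G := disj_of_nodup P hnodup
  have hcard5 : ∀ F ∈ P, F.card = 5 := (ballF_iff P _).mp fact_card5
  have hpair : ∀ F ∈ P, ∀ i j : Fin 6, i ≠ j → (F.filter fun σ => σ i = j).card = 1 :=
    (ballF_iff P _).mp fact_pair
  have hQ : ∀ F ∈ P, Q1 F ∨ Q2 F ∨ Q3 F ∨ Q4 F := (ballF_iff P _).mp fact_Q
  have hcover : ∀ σ : Equiv.Perm (Fin 6), (∀ i, σ i ≠ i) → ∃ F ∈ P, σ ∈ F := by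
    intro σ hσ
    have hDcard : (Finset.univ.filter (fun τ : Equiv.Perm (Fin 6) => ∀ i, τ i ≠ i)).card
        = 265 := by
      have h1 : Finset.univ.filter (fun τ : Equiv.Perm (Fin 6) => ∀ i, τ i ≠ i)
          = (derangements (Fin 6)).toFinset := by
        ext τ; simp [derangements]; exact (Set.mem_toFinset (s := {f : Equiv.Perm (Fin 6) | ∀ x, ¬f x = x})).symm
      rw [h1, Set.toFinset_card, card_derangements_eq_numDerangements]
      decide
    have hS : (P.biUnion id) ⊆
        Finset.univ.filter (fun τ : Equiv.Perm (Fin 6) => ∀ i, τ i ≠ i) := by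
      intro τ hτ
      simp only [Finset.mem_biUnion, id] at hτ
      obtain ⟨F, hF, hτF⟩ := hτ
      simpa using hder F hF τ hτF
    have hSc : (P.biUnion id).card = 265 := by
      rw [Finset.card_biUnion]
      · have hsum : ∑ u ∈ P, (id u : Finset (Equiv.Perm (Fin 6))).card = ∑ _u ∈ P, 5 :=
          Finset.sum_congr rfl fun F hF => hcard5 F hF
        rw [hsum, Finset.sum_const, fact_cardP, smul_eq_mul]
      · intro x hx y hy hxy
        rw [Function.onFun_apply, Finset.disjoint_left]
        intro a ha hay
        exact hxy (hdisj x hx y hy a ha hay)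
    have hmem : σ ∈ P.biUnion id := by
      rw [Finset.eq_of_subset_of_card_le hS (by rw [hDcard, hSc])]
      simpa using hσ
    simpa [Finset.mem_biUnion] using hmem
  refine ⟨P, fact_cardP, hder, ?_, ?_, ?_, ?_, ?_, ?_, ?_⟩
  · intro σ hσ
    obtain ⟨F, hF, hσF⟩ := hcover σ hσ
    exact ⟨F, ⟨hF, hσF⟩, fun G hG => hdisj G hG.1 F hF σ hG.2 hσF⟩
  · exact fun F hF i j hij => exu F _ (hpair F hF i j hij)
  · intro F hF
    rcases hQ F hF with h | h | h | h
    · exact Or.inl ((Q1_iff F (hder F hF)).mpr h)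
    · exact Or.inr (Or.inl ((Q2_iff F (hder F hF)).mpr h))
    · exact Or.inr (Or.inr (Or.inl ((Q3_iff F (hder F hF)).mpr h)))
    · exact Or.inr (Or.inr (Or.inr ((Q4_iff F (hder F hF)).mpr h)))
  · have he : {F | F ∈ P ∧ T1 F} = ↑(P.filter Q1) := by
      ext F
      simp only [Finset.coe_filter, Set.mem_setOf_eq]
      exact and_congr_right fun hF => Q1_iff F (hder F hF)
    rw [he, Set.ncard_coe_finset]; exact fact_c1
  · have he : {F | F ∈ P ∧ T2 F} = ↑(P.filter Q2) := by
      ext F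
      simp only [Finset.coe_filter, Set.mem_setOf_eq]
      exact and_congr_right fun hF => Q2_iff F (hder F hF)
    rw [he, Set.ncard_coe_finset]; exact fact_c2
  · have he : {F | F ∈ P ∧ T3 F} = ↑(P.filter Q3) := by
      ext F
      simp only [Finset.coe_filter, Set.mem_setOf_eq]
      exact and_congr_right fun hF => Q3_iff F (hder F hF)
    rw [he, Set.ncard_coe_finset]; exact fact_c3
  · have he : {F | F ∈ P ∧ T4 F} = ↑(P.filter Q4) := by
      ext F
      simp only [Finset.coe_filter, Set.mem_setOf_eq]
      exact and_congr_right fun hF => Q4_iff F (hder F hF)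
    rw [he, Set.ncard_coe_finset]; exact fact_c4
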